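/- Let S be a positive, closed, densely defined symmetric operator on a complex Hilbert space H with Cayley transform T = [A; Γ₂D_A], and let F denote the Friedrichs extension of S. Then for ξ ∈ dom(S*): ξ ∈ dom(F) if and only if there exists a sequence (ηₙ) in dom(T) = ran(I+S) such that (I+T)ηₙ → ξ in norm and (I+A)^{1/2}(ηₙ − ηₘ) → 0 in norm as m, n → ∞. -/

import Mathlib

open scoped InnerProductSpace ComplexOrder
open Filter Topology

noncomputable section

/-- The defect operator `D_C = (I - C*C)^{1/2}` of a bounded operator `C` between
complex Hilbert spaces. -/
def defectOp {E F : Type*} [NormedAddCommGroup E] [InnerProductSpace ℂ E] [CompleteSpace E]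
    [NormedAddCommGroup F] [InnerProductSpace ℂ F] [CompleteSpace F] (C : E →L[ℂ] F) :
    E →L[ℂ] E :=
  CFC.sqrt (1 - ContinuousLinearMap.adjoint C ∘L C)

/-- The defect space `𝒟_C`: the closure of the range of the defect operator `D_C`. -/
def defectSpace {E F : Type*} [NormedAddCommGroup E] [InnerProductSpace ℂ E] [CompleteSpace E]
    [NormedAddCommGroup F] [InnerProductSpace ℂ F] [CompleteSpace F] (C : E →L[ℂ] F) :
    Submodule ℂ E :=
  (LinearMap.range (defectOp C : E →ₗ[ℂ] E)).topologicalClosure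

/-- The positive square root of a (positive) bounded operator. -/
def opSqrt {E : Type*} [NormedAddCommGroup E] [InnerProductSpace ℂ E] [CompleteSpace E]
    (B : E →L[ℂ] E) : E →L[ℂ] E :=
  CFC.sqrt B

variable {H : Type*} [NormedAddCommGroup H] [InnerProductSpace ℂ H] [CompleteSpace H]


set_option maxHeartbeats 1000000 in
set_option synthInstance.maxHeartbeats 1000000 in
/-- Auxiliary: the squared norm of `B^{1/2} x` equals `re ⟪x, B x⟫` for positive `B`. -/
lemma opSqrt_norm_sq {E : Type*} [NormedAddCommGroup E] [InnerProductSpace ℂ E] [CompleteSpace E]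
    (B : E →L[ℂ] E) (hB : 0 ≤ B) (x : E) :
    ‖opSqrt B x‖ ^ 2 = (⟪x, B x⟫_ℂ).re := by
  have hnn : (0 : E →L[ℂ] E) ≤ opSqrt B := CFC.sqrt_nonneg (a := B)
  have hsa : IsSelfAdjoint (opSqrt B) :=
    ((ContinuousLinearMap.nonneg_iff_isPositive _).mp hnn).isSelfAdjoint
  have hsq : opSqrt B * opSqrt B = B := CFC.sqrt_mul_sqrt_self B hB
  have happ : opSqrt B (opSqrt B x) = B x := by
    have h := DFunLike.congr_fun hsq x
    rwa [ContinuousLinearMap.mul_apply] at h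
  have h2 : ⟪opSqrt B x, opSqrt B x⟫_ℂ = ⟪x, B x⟫_ℂ := by
    rw [← ContinuousLinearMap.adjoint_inner_right (opSqrt B) x (opSqrt B x),
      hsa.adjoint_eq, happ]
  have h1 : (‖opSqrt B x‖ : ℝ) ^ 2 = RCLike.re ⟪opSqrt B x, opSqrt B x⟫_ℂ :=
    (inner_self_eq_norm_sq _).symm
  rw [h1, h2]
  rfl

set_option maxHeartbeats 1000000 in
set_option synthInstance.maxHeartbeats 1000000 in
theorem statement18 (S : H →ₗ.[ℂ] H) (hdense : Dense (S.domain : Set H))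
    (hclosed : S.IsClosed)
    (hsymmS : ∀ h g : S.domain, ⟪S h, (g : H)⟫_ℂ = ⟪(h : H), S g⟫_ℂ)
    (hposS : ∀ h : S.domain, 0 ≤ ⟪S h, (h : H)⟫_ℂ)
    (D : Submodule ℂ H) [CompleteSpace D]
    (hDran : (D : Set H) = Set.range (fun h : S.domain => (h : H) + S h))
    (T : D →L[ℂ] H)
    (hTcayley : ∀ (h : S.domain) (hm : (h : H) + S h ∈ D),
      T ⟨(h : H) + S h, hm⟩ = (h : H) - S h)
    (A : D →L[ℂ] D) (hA : IsSelfAdjoint A) (hAc : ‖A‖ ≤ 1)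
    (Γ₂ : D →L[ℂ] ↥Dᗮ) (hΓ₂c : ‖Γ₂‖ ≤ 1) (hΓ₂ker : (defectSpace A)ᗮ ≤ LinearMap.ker (Γ₂ : D →ₗ[ℂ] ↥Dᗮ))
    (hdecomp : ∀ ξ : D, T ξ = (A ξ : H) + (Γ₂ (defectOp A ξ) : H))
    (ξ : H) (hξ : ξ ∈ S.adjoint.domain) :
    (∃ ξn : ℕ → S.domain,
      Tendsto (fun n => (ξn n : H)) atTop (𝓝 ξ) ∧
      Tendsto (fun p : ℕ × ℕ => ⟪(ξn p.1 : H) - (ξn p.2 : H), S (ξn p.1 - ξn p.2)⟫_ℂ)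
        atTop (𝓝 0)) ↔
    (∃ ηn : ℕ → D,
      Tendsto (fun n => ((ηn n : H) + T (ηn n))) atTop (𝓝 ξ) ∧
      Tendsto (fun p : ℕ × ℕ => ‖opSqrt (1 + A) (ηn p.1 - ηn p.2)‖) atTop (𝓝 0)) := by
  -- `1 + A` is a positive operator.
  have hApos : (0 : D →L[ℂ] D) ≤ 1 + A := by
    rw [ContinuousLinearMap.nonneg_iff_isPositive]
    refine ⟨ContinuousLinearMap.isSelfAdjoint_iff_isSymmetric.mp ((IsSelfAdjoint.one (R := D →L[ℂ] D)).add hA), fun x => ?_⟩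
    rw [ContinuousLinearMap.reApplyInnerSelf_apply]
    have h1 : (1 + A) x = x + A x := by simp [ContinuousLinearMap.add_apply]
    rw [h1, inner_add_left]
    have h2 : |RCLike.re ⟪A x, x⟫_ℂ| ≤ ‖x‖ * ‖x‖ := by
      calc |RCLike.re ⟪A x, x⟫_ℂ| ≤ ‖⟪A x, x⟫_ℂ‖ := RCLike.abs_re_le_norm _
        _ ≤ ‖A x‖ * ‖x‖ := norm_inner_le_norm _ _
        _ ≤ (‖A‖ * ‖x‖) * ‖x‖ := by
            gcongr; exact A.le_opNorm x
        _ ≤ (1 * ‖x‖) * ‖x‖ := by gcongr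
        _ = ‖x‖ * ‖x‖ := by ring
    have h3 : RCLike.re ⟪(x : D), x⟫_ℂ = ‖x‖ * ‖x‖ := by
      rw [inner_self_eq_norm_sq]; ring
    rw [map_add, h3]
    have := neg_abs_le (RCLike.re ⟪A x, x⟫_ℂ)
    linarith [h2, abs_nonneg (RCLike.re ⟪A x, x⟫_ℂ)]
  -- orthogonality of `Dᗮ` against `D`
  have horth : ∀ (w : ↥Dᗮ) (η : D), ⟪(η : H), (w : H)⟫_ℂ = 0 := fun w η =>
    ((Submodule.mem_orthogonal D (w : H)).mp w.2) (η : H) η.2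
  -- the key identity: the norm of `(1+A)^{1/2} η` squared equals `re ⟪η, η + T η⟫`.
  have key : ∀ η : D, ‖opSqrt (1 + A) η‖ ^ 2 = (⟪(η : H), (η : H) + T η⟫_ℂ).re := by
    intro η
    rw [opSqrt_norm_sq (1 + A) hApos η]
    congr 1
    have h4 : (1 + A) η = η + A η := by simp [ContinuousLinearMap.add_apply]
    rw [h4, inner_add_right, inner_add_right, Submodule.coe_inner, Submodule.coe_inner]
    congr 1
    rw [hdecomp η, inner_add_right, horth (Γ₂ (defectOp A η)) η, add_zero]
  -- positivity and realness of the quadratic form of `S`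
  have hreal : ∀ g : S.domain,
      ⟪(g : H), S g⟫_ℂ = ((⟪(g : H), S g⟫_ℂ).re : ℂ) ∧ 0 ≤ (⟪(g : H), S g⟫_ℂ).re := by
    intro g
    have h1 := hposS g
    rw [hsymmS g g, Complex.nonneg_iff] at h1
    exact ⟨Complex.ext (by simp) (by simp [← h1.2]), h1.1⟩
  -- membership of `h + S h` in `D`
  have hmem : ∀ h : S.domain, (h : H) + S h ∈ D := by
    intro h
    rw [← SetLike.mem_coe, hDran]
    exact ⟨h, rfl⟩
  set w : S.domain → D := fun h => ⟨(h : H) + S h, hmem h⟩ with hw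
  have hTw : ∀ h : S.domain, T (w h) = (h : H) - S h := fun h => hTcayley h (hmem h)
  have hwsub : ∀ h g : S.domain, w h - w g = w (h - g) := by
    intro h g
    apply Subtype.ext
    simp only [hw, AddSubgroupClass.coe_sub, Submodule.coe_sub]
    rw [S.map_sub]
    push_cast
    abel
  constructor
  · rintro ⟨ξn, hconv, hquad⟩
    refine ⟨fun n => (2 : ℂ)⁻¹ • w (ξn n), ?_, ?_⟩
    · have heq : (fun n => (((2 : ℂ)⁻¹ • w (ξn n) : D) : H) + T ((2 : ℂ)⁻¹ • w (ξn n)))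
          = fun n => (ξn n : H) := by
        funext n
        rw [map_smul, hTw, Submodule.coe_smul, hw]
        simp only
        module
      rw [heq]; exact hconv
    · -- the difference
      have hdiff : ∀ p : ℕ × ℕ, (2 : ℂ)⁻¹ • w (ξn p.1) - (2 : ℂ)⁻¹ • w (ξn p.2)
          = (2 : ℂ)⁻¹ • w (ξn p.1 - ξn p.2) := by
        intro p
        rw [← smul_sub, hwsub]
      have hval : ∀ p : ℕ × ℕ,
          ‖opSqrt (1 + A) ((2:ℂ)⁻¹ • w (ξn p.1) - (2:ℂ)⁻¹ • w (ξn p.2))‖ ^ 2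
            = 2⁻¹ * (‖(ξn p.1 : H) - (ξn p.2 : H)‖ ^ 2
                + (⟪(ξn p.1 : H) - (ξn p.2 : H), S (ξn p.1 - ξn p.2)⟫_ℂ).re) := by
        intro p
        rw [hdiff p, key]
        set g : S.domain := ξn p.1 - ξn p.2 with hg
        have hco : (((2:ℂ)⁻¹ • w g : D) : H) = (2:ℂ)⁻¹ • ((g : H) + S g) := by
          rw [Submodule.coe_smul]
        have hTg : T ((2:ℂ)⁻¹ • w g) = (2:ℂ)⁻¹ • ((g : H) - S g) := by
          rw [map_smul, hTw]
        have hsum : (((2:ℂ)⁻¹ • w g : D) : H) + T ((2:ℂ)⁻¹ • w g) = (g : H) := by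
          rw [hco, hTg]; module
        rw [hsum, hco, inner_smul_left, inner_add_left]
        have hgc : ((g : H)) = (ξn p.1 : H) - (ξn p.2 : H) := by
          rw [hg]; push_cast; ring
        have hsg : ⟪S g, (g : H)⟫_ℂ = ⟪(g : H), S g⟫_ℂ := hsymmS g g
        rw [hsg, ← Submodule.coe_inner, ← hgc]
        simp only [inner_self_eq_norm_sq_to_K, Submodule.coe_inner]
        simp [Complex.mul_re, Complex.add_re, Complex.add_im, map_inv₀, ← Complex.ofReal_pow,
          Complex.ofReal_re, Complex.ofReal_im, Submodule.coe_norm]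
      have hnorm0 : Tendsto (fun p : ℕ × ℕ => ‖(ξn p.1 : H) - (ξn p.2 : H)‖) atTop (𝓝 0) := by
        have hc : CauchySeq (fun n => (ξn n : H)) := hconv.cauchySeq
        rw [cauchySeq_iff_tendsto_dist_atTop_0] at hc
        simpa [dist_eq_norm] using hc
      have hsq0 : Tendsto (fun p : ℕ × ℕ =>
          ‖opSqrt (1 + A) ((2:ℂ)⁻¹ • w (ξn p.1) - (2:ℂ)⁻¹ • w (ξn p.2))‖ ^ 2) atTop (𝓝 0) := by
        simp only [hval]
        have h1 : Tendsto (fun p : ℕ × ℕ => ‖(ξn p.1 : H) - (ξn p.2 : H)‖ ^ 2) atTop (𝓝 0) := by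
          simpa using hnorm0.pow 2
        have h2 : Tendsto (fun p : ℕ × ℕ =>
            (⟪(ξn p.1 : H) - (ξn p.2 : H), S (ξn p.1 - ξn p.2)⟫_ℂ).re) atTop (𝓝 0) := by
          simpa [Function.comp_def] using (Complex.continuous_re.tendsto 0).comp hquad
        simpa using (h1.add h2).const_mul (2 : ℝ)⁻¹
      have := hsq0.sqrt
      simpa [Real.sqrt_sq (norm_nonneg _)] using this
  · rintro ⟨ηn, hconv, hcauchy⟩
    -- pick preimages in `dom S`
    have hpick : ∀ n : ℕ, ∃ h : S.domain, (h : H) + S h = ((ηn n : D) : H) := by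
      intro n
      have := (ηn n).2
      rw [← SetLike.mem_coe, hDran] at this
      obtain ⟨h, hh⟩ := this
      exact ⟨h, hh⟩
    choose hn hhn using hpick
    have hηn : ∀ n, ηn n = w (hn n) := by
      intro n; apply Subtype.ext; rw [hw]; exact (hhn n).symm
    refine ⟨fun n => (2 : ℂ) • hn n, ?_, ?_⟩
    · have heq : (fun n => ((ηn n : D) : H) + T (ηn n))
          = fun n => (((2 : ℂ) • hn n : S.domain) : H) := by
        funext n
        rw [hηn n, hTw, hw]
        simp only [Submodule.coe_smul]
        module
      rw [← heq]; exact hconv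
    · -- compute the quadratic form
      set g : ℕ × ℕ → S.domain := fun p => hn p.1 - hn p.2 with hgdef
      have hηd : ∀ p : ℕ × ℕ, ηn p.1 - ηn p.2 = w (g p) := by
        intro p; rw [hηn p.1, hηn p.2, hwsub]
      have hval : ∀ p : ℕ × ℕ, ‖opSqrt (1 + A) (ηn p.1 - ηn p.2)‖ ^ 2
          = 2 * (‖(g p : H)‖ ^ 2 + (⟪(g p : H), S (g p)⟫_ℂ).re) := by
        intro p
        rw [hηd p, key]
        have hco : ((w (g p) : D) : H) = (g p : H) + S (g p) := rfl
        have hsum : ((w (g p) : D) : H) + T (w (g p)) = (2 : ℂ) • (g p : H) := by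
          rw [hco, hTw]; module
        rw [hsum, hco, inner_smul_right, inner_add_left, hsymmS, ← Submodule.coe_inner]
        simp only [inner_self_eq_norm_sq_to_K, Submodule.coe_inner]
        simp [Complex.mul_re, Complex.add_re, Complex.add_im, ← Complex.ofReal_pow,
          Complex.ofReal_re, Complex.ofReal_im, Submodule.coe_norm]
      have hsq0 : Tendsto (fun p : ℕ × ℕ => ‖opSqrt (1 + A) (ηn p.1 - ηn p.2)‖ ^ 2)
          atTop (𝓝 0) := by
        simpa using hcauchy.pow 2
      have hF : Tendsto (fun p : ℕ × ℕ => (⟪(g p : H), S (g p)⟫_ℂ).re) atTop (𝓝 0) := by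
        apply squeeze_zero (g := fun p : ℕ × ℕ =>
            2⁻¹ * ‖opSqrt (1 + A) (ηn p.1 - ηn p.2)‖ ^ 2) (fun p => (hreal (g p)).2)
        · intro p
          rw [hval p]
          have := sq_nonneg ‖(g p : H)‖
          nlinarith
        · simpa using hsq0.const_mul (2 : ℝ)⁻¹
      have h6 : ∀ p : ℕ × ℕ,
          ((4 * (⟪(g p : H), S (g p)⟫_ℂ).re : ℝ) : ℂ)
            = ⟪(((2 : ℂ) • hn p.1 : S.domain) : H) - (((2 : ℂ) • hn p.2 : S.domain) : H),
                S ((2 : ℂ) • hn p.1 - (2 : ℂ) • hn p.2)⟫_ℂ := by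
        intro p
        have h5 : (2 : ℂ) • hn p.1 - (2 : ℂ) • hn p.2 = (2 : ℂ) • g p := by
          rw [hgdef]; simp [smul_sub]
        have h7 : (((2 : ℂ) • hn p.1 : S.domain) : H) - (((2 : ℂ) • hn p.2 : S.domain) : H)
            = (2 : ℂ) • (g p : H) := by
          rw [hgdef]; simp [smul_sub]
        rw [h7, h5, S.map_smul, inner_smul_left, inner_smul_right, (hreal (g p)).1]
        push_cast
        ring_nf
        simp [Complex.ext_iff]
        ring
      have h8 : Tendsto (fun p : ℕ × ℕ =>
          ((4 * (⟪(g p : H), S (g p)⟫_ℂ).re : ℝ) : ℂ)) atTop (𝓝 0) := by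
        have h9 : Tendsto (fun p : ℕ × ℕ =>
            (4 * (⟪(g p : H), S (g p)⟫_ℂ).re : ℝ)) atTop (𝓝 0) := by
          simpa using hF.const_mul (4 : ℝ)
        have := (Complex.continuous_ofReal.tendsto 0).comp h9
        simpa [Function.comp_def] using this
      exact Tendsto.congr h6 h8
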